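/- Let $\phi_1,\dots,\phi_K$ be arbitrarily dependent Bernoulli random variables with $\mathbb{E}[\phi_k] \le \alpha_k$ for each $k$, let $w_1,\dots,w_K \ge 0$ with $\sum_k w_k = 1$, and let $U \sim \mathrm{Unif}(0,1)$ be independent of the $\phi_k$. Then $\mathbb{P}\left(\sum_{k=1}^K w_k \phi_k \ge \frac{1-U}{2}\right) \le 2\sum_{k=1}^K w_k \alpha_k$. -/

import Mathlib

open MeasureTheory ProbabilityTheory

/-- Randomized weighted majority vote: for arbitrarily dependent Bernoulli random
variables `φ k` with means at most `α k`, weights `w` summing to 1, and an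
independent uniform `U` on `[0,1]`,
`P(∑ w k * φ k ≥ (1 - U)/2) ≤ 2 ∑ w k * α k`. -/
theorem randomized_weighted_majority {Ω : Type*} [MeasurableSpace Ω]
    (μ : Measure Ω) [IsProbabilityMeasure μ]
    (K : ℕ) (hK : 2 ≤ K)
    (α : Fin K → ℝ) (hα0 : ∀ k, 0 ≤ α k) (hα1 : ∀ k, α k ≤ 1)
    (w : Fin K → ℝ) (hw0 : ∀ k, 0 ≤ w k) (hw1 : ∑ k, w k = 1)
    (φ : Fin K → Ω → ℝ)
    (hmeas : ∀ k, Measurable (φ k))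
    (h01 : ∀ k ω, φ k ω = 0 ∨ φ k ω = 1)
    (hexp : ∀ k, ∫ ω, φ k ω ∂μ ≤ α k)
    (U : Ω → ℝ) (hU : Measurable U)
    (hUunif : μ.map U = (volume.restrict (Set.Icc (0 : ℝ) 1)))
    (hindep : IndepFun U (fun ω (k : Fin K) => φ k ω) μ) :
    μ {ω | ∑ k, w k * φ k ω ≥ (1 - U ω) / 2} ≤
      ENNReal.ofReal (2 * ∑ k, w k * α k) := by
  set S : Ω → ℝ := fun ω => ∑ k, w k * φ k ω with hSdef
  have hS : Measurable S := by
    apply Finset.measurable_sum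
    exact fun k _ => (hmeas k).const_mul (w k)
  -- independence of S and U
  have hSU : IndepFun S U μ := by
    have : Measurable (fun v : Fin K → ℝ => ∑ k, w k * v k) := by
      apply Finset.measurable_sum
      exact fun k _ => (measurable_pi_apply k : Measurable fun v : Fin K → ℝ => v k).const_mul (w k)
    exact (hindep.comp measurable_id this).symm
  have hmap : μ.map (fun ω => (S ω, U ω)) = (μ.map S).prod (μ.map U) :=
    (indepFun_iff_map_prod_eq_prod_map_map hS.aemeasurable hU.aemeasurable).mp hSU
  set E : Set (ℝ × ℝ) := {p : ℝ × ℝ | p.1 ≥ (1 - p.2) / 2} with hEdef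
  have hE : MeasurableSet E := by
    have : E = {p : ℝ × ℝ | (1 - p.2) / 2 ≤ p.1} := rfl
    rw [this]
    exact measurableSet_le (((measurable_const.sub measurable_snd)).div_const 2) measurable_fst
  have hset : {ω | ∑ k, w k * φ k ω ≥ (1 - U ω) / 2}
      = (fun ω => (S ω, U ω)) ⁻¹' E := rfl
  rw [hset, ← Measure.map_apply (hS.prodMk hU) hE, hmap, hUunif,
    Measure.prod_apply hE]
  have hslice : ∀ s : ℝ,
      (volume.restrict (Set.Icc (0:ℝ) 1)) (Prod.mk s ⁻¹' E) ≤ ENNReal.ofReal (2 * s) := by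
    intro s
    have h1 : Prod.mk s ⁻¹' E = Set.Ici (1 - 2 * s) := by
      ext u
      simp only [hEdef, Set.mem_preimage, Set.mem_setOf_eq, Set.mem_Ici, ge_iff_le]
      constructor <;> intro h <;> linarith
    rw [h1, Measure.restrict_apply measurableSet_Ici]
    have hsub : Set.Ici (1 - 2 * s) ∩ Set.Icc 0 1 ⊆ Set.Icc (max (1 - 2 * s) 0) 1 := by
      rintro u ⟨h1u, h2u, h3u⟩
      exact ⟨max_le h1u h2u, h3u⟩
    refine le_trans (measure_mono hsub) ?_
    rw [Real.volume_Icc]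
    apply ENNReal.ofReal_le_ofReal
    have := le_max_left (1 - 2 * s) 0
    linarith
  calc ∫⁻ s, (volume.restrict (Set.Icc (0:ℝ) 1)) (Prod.mk s ⁻¹' E) ∂(μ.map S)
      ≤ ∫⁻ s, ENNReal.ofReal (2 * s) ∂(μ.map S) := lintegral_mono fun s => hslice s
    _ = ∫⁻ ω, ENNReal.ofReal (2 * S ω) ∂μ := by
        rw [lintegral_map (by fun_prop) hS]
    _ = ENNReal.ofReal (∫ ω, 2 * S ω ∂μ) := by
        have hintk : ∀ k, Integrable (φ k) μ := by
          intro k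
          refine ⟨(hmeas k).aestronglyMeasurable, ?_⟩
          apply HasFiniteIntegral.of_bounded (C := 1)
          filter_upwards with ω
          rcases h01 k ω with h | h <;> simp [h]
        have hintS : Integrable (fun ω => 2 * S ω) μ := by
          apply Integrable.const_mul
          exact integrable_finset_sum _ fun k _ => (hintk k).const_mul (w k)
        have hpos : 0 ≤ᵐ[μ] fun ω => 2 * S ω := by
          filter_upwards with ω
          simp only [Pi.zero_apply]
          have : 0 ≤ S ω := by
            apply Finset.sum_nonneg
            intro k _
            rcases h01 k ω with h | h <;> simp [h, hw0 k]
          linarith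
        exact (ofReal_integral_eq_lintegral_ofReal hintS hpos).symm
    _ ≤ ENNReal.ofReal (2 * ∑ k, w k * α k) := by
        apply ENNReal.ofReal_le_ofReal
        have hintk : ∀ k, Integrable (φ k) μ := by
          intro k
          refine ⟨(hmeas k).aestronglyMeasurable, ?_⟩
          apply HasFiniteIntegral.of_bounded (C := 1)
          filter_upwards with ω
          rcases h01 k ω with h | h <;> simp [h]
        rw [integral_const_mul, hSdef]
        rw [integral_finset_sum _ fun k _ => (hintk k).const_mul (w k)]
        have : ∀ k ∈ Finset.univ, ∫ ω, w k * φ k ω ∂μ ≤ w k * α k := by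
          intro k _
          rw [integral_const_mul]
          exact mul_le_mul_of_nonneg_left (hexp k) (hw0 k)
        have hsum := Finset.sum_le_sum this
        linarith
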